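/- Integration-by-parts revenue identity: let G^{-1} : [0,1] → ℝ be continuously differentiable and non-decreasing and R^{-1} : [0,1] → ℝ₊ be non-decreasing and right-continuous (of bounded variation). Then ∫_0^1 (G^{-1}(t)R^{-1}(t) − ∫_0^t R^{-1}(s) dG^{-1}(s)) dt = ∫_0^1 G^{-1}(t)(1−t) dR^{-1}(t) + R^{-1}(0)·G^{-1}(0), where dR^{-1} is the Lebesgue–Stieltjes measure of R^{-1}. -/

import Mathlib

open MeasureTheory intervalIntegral

private lemma ind_integrable (g : ℝ → ℝ) (hg : Continuous g) (C : ℝ) (hC : ∀ u, |g u| ≤ C)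
    {S : Set (ℝ × ℝ)} (hS : MeasurableSet S) (μ ν : Measure ℝ)
    [IsFiniteMeasure μ] [IsFiniteMeasure ν] :
    Integrable (fun p : ℝ × ℝ => S.indicator (fun q : ℝ × ℝ => g q.2) p) (μ.prod ν) := by
  have hmeas : AEStronglyMeasurable (fun p : ℝ × ℝ => S.indicator (fun q : ℝ × ℝ => g q.2) p)
      (μ.prod ν) :=
    ((hg.comp continuous_snd).aestronglyMeasurable).indicator hS
  refine (integrable_const C).mono' hmeas ?_
  refine Filter.Eventually.of_forall fun p => ?_
  by_cases hp : p ∈ S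
  · simpa [Set.indicator_of_mem hp] using hC p.2
  · simp only [Set.indicator_of_notMem hp, norm_zero]
    exact le_trans (abs_nonneg (g p.2)) (hC p.2)

private lemma key_ibp (Ginv : ℝ → ℝ) (hGsmooth : ContDiff ℝ 1 Ginv)
    (R : StieltjesFunction ℝ) (t : ℝ) (ht : 0 ≤ t) :
    ∫ s in Set.Ioc (0:ℝ) t, Ginv s ∂(R.measure)
      = Ginv t * R t - Ginv 0 * R 0 - ∫ s in (0:ℝ)..t, R s * deriv Ginv s := by
  set dG := deriv Ginv with hdG
  have hdGc : Continuous dG := hGsmooth.continuous_deriv le_rfl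
  have hGc : Continuous Ginv := hGsmooth.continuous
  have hFTC : ∀ s : ℝ, ∫ u in (0:ℝ)..s, dG u = Ginv s - Ginv 0 := fun s =>
    intervalIntegral.integral_deriv_eq_sub
      (fun x _ => (hGsmooth.differentiable one_ne_zero).differentiableAt)
      (hdGc.intervalIntegrable _ _)
  -- clamped derivative
  set c : ℝ → ℝ := fun u => dG (max 0 (min u t)) with hc
  have hcc : Continuous c := hdGc.comp (continuous_const.max (continuous_id.min continuous_const))
  have hclamp : ∀ u ∈ Set.Icc (0:ℝ) t, c u = dG u := by
    intro u hu
    simp only [hc, min_eq_left hu.2, max_eq_right hu.1]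
  obtain ⟨x₀, hx₀, hx₀max⟩ := isCompact_Icc.exists_isMaxOn (Set.nonempty_Icc.2 ht)
    (continuous_abs.comp hdGc).continuousOn
  have hCb : ∀ u, |c u| ≤ |dG x₀| := by
    intro u
    exact hx₀max ⟨le_max_left _ _, max_le ht (min_le_right u t)⟩
  set μ : Measure ℝ := R.measure.restrict (Set.Ioc 0 t) with hμ
  set ν : Measure ℝ := volume.restrict (Set.Ioc 0 t) with hν
  haveI : IsFiniteMeasure μ := by
    constructor
    rw [hμ, Measure.restrict_apply_univ, R.measure_Ioc]
    exact ENNReal.ofReal_lt_top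
  haveI : IsFiniteMeasure ν := by
    constructor
    rw [hν, Measure.restrict_apply_univ]
    exact measure_Ioc_lt_top
  set S : Set (ℝ × ℝ) := {p : ℝ × ℝ | p.2 < p.1} with hSdef
  have hS : MeasurableSet S := measurableSet_lt measurable_snd measurable_fst
  have hint := ind_integrable c hcc (|dG x₀|) hCb hS μ ν
  have hswap := MeasureTheory.integral_integral_swap
    (f := fun s u => S.indicator (fun q : ℝ × ℝ => c q.2) (s, u)) (μ := μ) (ν := ν) hint
  -- evaluate left side of hswap
  have hleft : (∫ s, ∫ u, S.indicator (fun q : ℝ × ℝ => c q.2) (s, u) ∂ν ∂μ)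
      = ∫ s in Set.Ioc (0:ℝ) t, (Ginv s - Ginv 0) ∂(R.measure) := by
    rw [hμ]
    refine setIntegral_congr_fun measurableSet_Ioc fun s hs => ?_
    have h1 : (fun u => S.indicator (fun q : ℝ × ℝ => c q.2) (s, u))
        = (Set.Iio s).indicator c := by
      funext u
      simp [Set.indicator_apply, hSdef, Set.mem_Iio]
    rw [h1, MeasureTheory.integral_indicator measurableSet_Iio, hν,
      Measure.restrict_restrict measurableSet_Iio]
    have h2 : Set.Iio s ∩ Set.Ioc 0 t = Set.Ioo 0 s := by
      ext x
      constructor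
      · rintro ⟨hx1, hx2, _⟩; exact ⟨hx2, hx1⟩
      · rintro ⟨hx1, hx2⟩; exact ⟨hx2, hx1, le_trans hx2.le hs.2⟩
    rw [h2]
    have h3 : ∫ x in Set.Ioo (0:ℝ) s, c x = ∫ x in Set.Ioo (0:ℝ) s, dG x :=
      setIntegral_congr_fun measurableSet_Ioo fun x hx =>
        hclamp x ⟨hx.1.le, le_trans hx.2.le hs.2⟩
    rw [h3, ← MeasureTheory.integral_Ioc_eq_integral_Ioo,
      ← intervalIntegral.integral_of_le hs.1.le, hFTC]
  -- evaluate right side of hswap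
  have hright : (∫ u, ∫ s, S.indicator (fun q : ℝ × ℝ => c q.2) (s, u) ∂μ ∂ν)
      = ∫ u in Set.Ioc (0:ℝ) t, dG u * (R t - R u) := by
    rw [hν]
    refine setIntegral_congr_fun measurableSet_Ioc fun u hu => ?_
    have h1 : (fun s => S.indicator (fun q : ℝ × ℝ => c q.2) (s, u))
        = (Set.Ioi u).indicator (fun _ => c u) := by
      funext s
      simp [Set.indicator_apply, hSdef, Set.mem_Ioi]
    rw [h1, integral_indicator_const _ measurableSet_Ioi, hμ,
      measureReal_def, Measure.restrict_apply measurableSet_Ioi]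
    have h2 : Set.Ioi u ∩ Set.Ioc 0 t = Set.Ioc u t := by
      ext x
      constructor
      · rintro ⟨hx1, _, hx3⟩; exact ⟨hx1, hx3⟩
      · rintro ⟨hx1, hx2⟩; exact ⟨hx1, lt_trans hu.1 hx1, hx2⟩
    rw [h2, R.measure_Ioc, ENNReal.toReal_ofReal (sub_nonneg.2 (R.mono hu.2)),
      hclamp u ⟨hu.1.le, hu.2⟩]
    rw [smul_eq_mul, mul_comm]
  -- integrability facts
  have hR_II : IntervalIntegrable (fun s => R s) volume 0 t := R.mono.intervalIntegrable
  have hdG_II : IntervalIntegrable dG volume 0 t := hdGc.intervalIntegrable 0 t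
  have hRdG_II : IntervalIntegrable (fun u => dG u * R u) volume 0 t :=
    hR_II.continuousOn_mul hdGc.continuousOn
  have hRdG_II' : IntervalIntegrable (fun u => R u * dG u) volume 0 t :=
    hR_II.mul_continuousOn hdGc.continuousOn
  -- compute the right side further
  have hr2 : ∫ u in Set.Ioc (0:ℝ) t, dG u * (R t - R u)
      = R t * (Ginv t - Ginv 0) - ∫ u in (0:ℝ)..t, R u * dG u := by
    rw [← intervalIntegral.integral_of_le ht]
    have h1 : ∀ u : ℝ, dG u * (R t - R u) = R t * dG u - R u * dG u := fun u => by ring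
    simp_rw [h1]
    rw [intervalIntegral.integral_sub (hdG_II.const_mul _) hRdG_II',
      intervalIntegral.integral_const_mul, hFTC]
  -- integrability of Ginv over the Stieltjes measure
  have hGint : IntegrableOn Ginv (Set.Ioc 0 t) R.measure :=
    ((hGc.integrableOn_Icc (μ := R.measure))).mono_set Set.Ioc_subset_Icc_self
  have hl2 : ∫ s in Set.Ioc (0:ℝ) t, (Ginv s - Ginv 0) ∂(R.measure)
      = (∫ s in Set.Ioc (0:ℝ) t, Ginv s ∂(R.measure)) - (R t - R 0) * Ginv 0 := by
    rw [integral_sub hGint (integrableOn_const (lt_top_iff_ne_top.1 ?_)), setIntegral_const, measureReal_def,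
      R.measure_Ioc, ENNReal.toReal_ofReal (sub_nonneg.2 (R.mono ht)), smul_eq_mul]
    rw [R.measure_Ioc]
    exact ENNReal.ofReal_lt_top
  have hmain := hswap
  rw [hleft, hright, hl2, hr2] at hmain
  have : (∫ s in (0:ℝ)..t, R s * dG s) = ∫ s in (0:ℝ)..t, R s * deriv Ginv s := rfl
  rw [this] at hmain
  linarith [hmain]

/-- Integration-by-parts revenue identity: expected revenue (value times quality minus
information rent, integrated over quantiles) equals the integral of `G⁻¹(t)(1-t)` against the
Lebesgue–Stieltjes measure of the non-decreasing right-continuous `R⁻¹`, plus `R⁻¹(0)·G⁻¹(0)`. -/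
theorem revenue_integration_by_parts (Ginv : ℝ → ℝ)
    (hGsmooth : ContDiff ℝ 1 Ginv) (hGmono : Monotone Ginv)
    (R : StieltjesFunction ℝ) (hRnn : ∀ t ∈ Set.Icc (0:ℝ) 1, 0 ≤ R t) :
    ∫ t in (0:ℝ)..1, (Ginv t * R t - ∫ s in (0:ℝ)..t, R s * deriv Ginv s)
      = (∫ t in Set.Ioc (0:ℝ) 1, Ginv t * (1 - t) ∂(R.measure)) + R 0 * Ginv 0 := by
  have hGc : Continuous Ginv := hGsmooth.continuous
  set g : ℝ → ℝ := fun t => ∫ s in Set.Ioc (0:ℝ) t, Ginv s ∂(R.measure) with hg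
  -- rewrite the integrand
  have hcongr : ∫ t in (0:ℝ)..1, (Ginv t * R t - ∫ s in (0:ℝ)..t, R s * deriv Ginv s)
      = ∫ t in (0:ℝ)..1, (g t + Ginv 0 * R 0) := by
    refine intervalIntegral.integral_congr fun t htm => ?_
    rw [Set.uIcc_of_le (zero_le_one)] at htm
    have := key_ibp Ginv hGsmooth R t htm.1
    rw [hg]
    simp only
    linarith [this]
  rw [hcongr]
  -- clamped Ginv
  set c : ℝ → ℝ := fun u => Ginv (max 0 (min u 1)) with hc
  have hcc : Continuous c := hGc.comp (continuous_const.max (continuous_id.min continuous_const))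
  have hclamp : ∀ u ∈ Set.Icc (0:ℝ) 1, c u = Ginv u := by
    intro u hu
    simp only [hc, min_eq_left hu.2, max_eq_right hu.1]
  obtain ⟨x₀, hx₀, hx₀max⟩ := isCompact_Icc.exists_isMaxOn (Set.nonempty_Icc.2 zero_le_one)
    (continuous_abs.comp hGc).continuousOn
  have hCb : ∀ u, |c u| ≤ |Ginv x₀| := fun u =>
    hx₀max ⟨le_max_left _ _, max_le zero_le_one (min_le_right u 1)⟩
  set μ : Measure ℝ := volume.restrict (Set.Ioc (0:ℝ) 1) with hμ
  set ν : Measure ℝ := R.measure.restrict (Set.Ioc (0:ℝ) 1) with hν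
  haveI : IsFiniteMeasure μ := by
    constructor
    rw [hμ, Measure.restrict_apply_univ]
    exact measure_Ioc_lt_top
  haveI : IsFiniteMeasure ν := by
    constructor
    rw [hν, Measure.restrict_apply_univ, R.measure_Ioc]
    exact ENNReal.ofReal_lt_top
  set S : Set (ℝ × ℝ) := {p : ℝ × ℝ | p.2 ≤ p.1} with hSdef
  have hS : MeasurableSet S := measurableSet_le measurable_snd measurable_fst
  have hint := ind_integrable c hcc (|Ginv x₀|) hCb hS μ ν
  have hswap := MeasureTheory.integral_integral_swap
    (f := fun t s => S.indicator (fun q : ℝ × ℝ => c q.2) (t, s)) (μ := μ) (ν := ν) hint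
  -- inner evaluation (t fixed)
  have hinner : ∀ t ∈ Set.Ioc (0:ℝ) 1,
      (∫ s, S.indicator (fun q : ℝ × ℝ => c q.2) (t, s) ∂ν) = g t := by
    intro t htm
    have h1 : (fun s => S.indicator (fun q : ℝ × ℝ => c q.2) (t, s))
        = (Set.Iic t).indicator c := by
      funext s
      simp [Set.indicator_apply, hSdef, Set.mem_Iic]
    rw [h1, MeasureTheory.integral_indicator measurableSet_Iic, hν,
      Measure.restrict_restrict measurableSet_Iic]
    have h2 : Set.Iic t ∩ Set.Ioc 0 1 = Set.Ioc 0 t := by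
      ext x
      constructor
      · rintro ⟨hx1, hx2, _⟩; exact ⟨hx2, hx1⟩
      · rintro ⟨hx1, hx2⟩; exact ⟨hx2, hx1, le_trans hx2 htm.2⟩
    rw [h2, hg]
    exact setIntegral_congr_fun measurableSet_Ioc fun x hx =>
      hclamp x ⟨hx.1.le, le_trans hx.2 htm.2⟩
  -- left side of hswap
  have hleft : (∫ t, ∫ s, S.indicator (fun q : ℝ × ℝ => c q.2) (t, s) ∂ν ∂μ)
      = ∫ t in Set.Ioc (0:ℝ) 1, g t := by
    rw [hμ]
    exact setIntegral_congr_fun measurableSet_Ioc hinner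
  -- right side of hswap
  have hright : (∫ s, ∫ t, S.indicator (fun q : ℝ × ℝ => c q.2) (t, s) ∂μ ∂ν)
      = ∫ s in Set.Ioc (0:ℝ) 1, Ginv s * (1 - s) ∂(R.measure) := by
    rw [hν]
    refine setIntegral_congr_fun measurableSet_Ioc fun s hs => ?_
    have h1 : (fun t => S.indicator (fun q : ℝ × ℝ => c q.2) (t, s))
        = (Set.Ici s).indicator (fun _ => c s) := by
      funext t
      simp [Set.indicator_apply, hSdef, Set.mem_Ici]
    rw [h1, integral_indicator_const _ measurableSet_Ici, hμ,
      measureReal_def, Measure.restrict_apply measurableSet_Ici]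
    have h2 : Set.Ici s ∩ Set.Ioc 0 1 = Set.Icc s 1 := by
      ext x
      constructor
      · rintro ⟨hx1, _, hx3⟩; exact ⟨hx1, hx3⟩
      · rintro ⟨hx1, hx2⟩; exact ⟨hx1, lt_of_lt_of_le hs.1 hx1, hx2⟩
    rw [h2, Real.volume_Icc, ENNReal.toReal_ofReal (sub_nonneg.2 hs.2),
      hclamp s ⟨hs.1.le, hs.2⟩, smul_eq_mul, mul_comm]
  -- integrability of g on Ioc 0 1
  have hg_int : IntegrableOn g (Set.Ioc (0:ℝ) 1) volume := by
    have := hint.integral_prod_left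
    refine (Integrable.congr this ?_ : Integrable g μ)
    filter_upwards [ae_restrict_mem measurableSet_Ioc] with t htm
    exact hinner t htm
  -- put it together
  rw [intervalIntegral.integral_of_le zero_le_one,
    integral_add hg_int (integrableOn_const (lt_top_iff_ne_top.1 measure_Ioc_lt_top))]
  have hconst : ∫ _ in Set.Ioc (0:ℝ) 1, (Ginv 0 * R 0) = Ginv 0 * R 0 := by
    rw [setIntegral_const, measureReal_def, Real.volume_Ioc, smul_eq_mul]
    norm_num
  rw [hconst]
  have : (∫ t in Set.Ioc (0:ℝ) 1, g t) = ∫ s in Set.Ioc (0:ℝ) 1, Ginv s * (1 - s) ∂(R.measure) := by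
    rw [← hleft, ← hright]
    exact hswap
  rw [this]
  ring
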